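/- Let ℓ ≥ 0 be an integer, s ∈ ℂ with s ≠ 0, and 0 < r1 ≤ r2. Suppose W_ℓ(s η) ≠ 0 for every η in the interval [r1, r2]. Then W_ℓ(s r2)/W_ℓ(s r1) = exp( ∫_{r1}^{r2} Ω̂_ℓ(s, η) / η dη ); equivalently, the teleportation kernel admits the integral representation Φ̂_ℓ(s, r1, r2) = −1 + exp( ∫_{r1}^{r2} Ω̂_ℓ(s, η) / η dη ). -/

import Mathlib

/-- The coefficients `c_{ℓk} = (ℓ+k)! / (2^k k! (ℓ-k)!)`. -/
noncomputable def besselCoeff (ℓ k : ℕ) : ℂ :=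
  (Nat.factorial (ℓ + k) : ℂ) / (2 ^ k * Nat.factorial k * Nat.factorial (ℓ - k))

/-- `W_ℓ(z) = ∑_{k=0}^ℓ c_{ℓk} z^{-k}`. -/
noncomputable def Wl (ℓ : ℕ) (z : ℂ) : ℂ :=
  ∑ k ∈ Finset.range (ℓ + 1), besselCoeff ℓ k / z ^ k

/-- The frequency-domain boundary kernel `Ω̂_ℓ(s,r) = s r W'_ℓ(s r)/W_ℓ(s r)`. -/
noncomputable def boundaryKernel (ℓ : ℕ) (s : ℂ) (r : ℝ) : ℂ :=
  s * r * deriv (Wl ℓ) (s * r) / Wl ℓ (s * r)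

/-- Explicit derivative of `Wl`. -/
noncomputable def Wl' (ℓ : ℕ) (z : ℂ) : ℂ :=
  ∑ k ∈ Finset.range (ℓ + 1), besselCoeff ℓ k * (((-(k : ℤ)) : ℂ) * z ^ ((-(k : ℤ)) - 1))

lemma Wl_eq (ℓ : ℕ) (z : ℂ) :
    Wl ℓ z = ∑ k ∈ Finset.range (ℓ + 1), besselCoeff ℓ k * z ^ (-(k : ℤ)) := by
  unfold Wl
  refine Finset.sum_congr rfl fun k _ => ?_
  rw [zpow_neg, zpow_natCast, div_eq_mul_inv]

lemma hasDerivAt_Wl (ℓ : ℕ) {z : ℂ} (hz : z ≠ 0) : HasDerivAt (Wl ℓ) (Wl' ℓ z) z := by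
  have hfun : Wl ℓ = fun z => ∑ k ∈ Finset.range (ℓ + 1), besselCoeff ℓ k * z ^ (-(k : ℤ)) :=
    funext (Wl_eq ℓ)
  rw [hfun]
  refine HasDerivAt.fun_sum fun k _ => ?_
  have := (hasDerivAt_zpow (-(k : ℤ)) z (Or.inl hz)).const_mul (besselCoeff ℓ k)
  simpa using this

lemma continuousAt_Wl' (ℓ : ℕ) {z : ℂ} (hz : z ≠ 0) : ContinuousAt (Wl' ℓ) z := by
  have : HasDerivAt (Wl' ℓ)
      (∑ k ∈ Finset.range (ℓ + 1), besselCoeff ℓ k * (((-(k : ℤ)) : ℂ) *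
        (((-(k : ℤ) - 1 : ℤ)) * z ^ ((-(k : ℤ) - 1) - 1)))) z := by
    refine HasDerivAt.fun_sum fun k _ => ?_
    exact ((hasDerivAt_zpow (-(k : ℤ) - 1) z (Or.inl hz)).const_mul
      (((-(k : ℤ)) : ℂ))).const_mul (besselCoeff ℓ k)
  exact this.continuousAt

/-- Integral representation of the teleportation kernel:
`W_ℓ(s r2)/W_ℓ(s r1) = exp(∫_{r1}^{r2} Ω̂_ℓ(s,η)/η dη)`, equivalently
`Φ̂_ℓ(s,r1,r2) = -1 + exp(∫_{r1}^{r2} Ω̂_ℓ(s,η)/η dη)`. -/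
theorem stmt_7 (ℓ : ℕ) (s : ℂ) (hs : s ≠ 0) (r1 r2 : ℝ) (hr1 : 0 < r1) (hr12 : r1 ≤ r2)
    (hW : ∀ η ∈ Set.Icc r1 r2, Wl ℓ (s * η) ≠ 0) :
    Wl ℓ (s * r2) / Wl ℓ (s * r1)
        = Complex.exp (∫ η in r1..r2, boundaryKernel ℓ s η / (η : ℂ)) ∧
      -1 + Wl ℓ (s * r2) / Wl ℓ (s * r1)
        = -1 + Complex.exp (∫ η in r1..r2, boundaryKernel ℓ s η / (η : ℂ)) := by
  set f : ℝ → ℂ := fun η => s * Wl' ℓ (s * η) / Wl ℓ (s * η) with hf_def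
  set U : Set ℝ := {t | s * (t : ℂ) ≠ 0 ∧ Wl ℓ (s * t) ≠ 0} with hU_def
  have hmulc : ∀ t : ℝ, ContinuousAt (fun u : ℝ => s * (u : ℂ)) t := fun t =>
    (continuous_const.mul Complex.continuous_ofReal).continuousAt
  -- U is open
  have hU : IsOpen U := by
    rw [isOpen_iff_mem_nhds]
    rintro t ⟨ht0, htW⟩
    have hWc : ContinuousAt (fun u : ℝ => Wl ℓ (s * u)) t :=
      ContinuousAt.comp (g := Wl ℓ) (f := fun u : ℝ => s * (u : ℂ))
        ((hasDerivAt_Wl ℓ ht0).continuousAt) (hmulc t)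
    have h1 : ∀ᶠ u : ℝ in nhds t, Wl ℓ (s * (u : ℂ)) ≠ 0 := hWc.eventually_ne htW
    have h2 : ∀ᶠ u : ℝ in nhds t, s * (u : ℂ) ≠ 0 := (hmulc t).eventually_ne ht0
    exact (h2.and h1).mono fun u hu => hu
  have hIccU : Set.Icc r1 r2 ⊆ U := by
    intro t ht
    have htpos : (0 : ℝ) < t := lt_of_lt_of_le hr1 ht.1
    refine ⟨mul_ne_zero hs ?_, hW t ht⟩
    exact_mod_cast htpos.ne'
  -- f is continuous on U
  have hfU : ContinuousOn f U := by
    refine continuousOn_of_forall_continuousAt ?_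
    rintro t ⟨ht0, htW⟩
    have hWc : ContinuousAt (fun u : ℝ => Wl ℓ (s * u)) t :=
      ContinuousAt.comp (g := Wl ℓ) (f := fun u : ℝ => s * (u : ℂ))
        ((hasDerivAt_Wl ℓ ht0).continuousAt) (hmulc t)
    have hW'c : ContinuousAt (fun u : ℝ => Wl' ℓ (s * u)) t :=
      ContinuousAt.comp (g := Wl' ℓ) (f := fun u : ℝ => s * (u : ℂ))
        (continuousAt_Wl' ℓ ht0) (hmulc t)
    exact (continuousAt_const.mul hW'c).div hWc htW
  set g : ℝ → ℂ := fun t => Wl ℓ (s * t) with hg_def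
  have hg : ∀ t ∈ Set.Icc r1 r2, HasDerivAt g (s * Wl' ℓ (s * t)) t := by
    intro t ht
    obtain ⟨ht0, htW⟩ := hIccU ht
    have he : HasDerivAt (fun z : ℂ => Wl ℓ (s * z)) (Wl' ℓ (s * t) * s) (t : ℂ) := by
      have hlin : HasDerivAt (fun z : ℂ => s * z) s (t : ℂ) := by
        simpa using (hasDerivAt_id (t : ℂ)).const_mul s
      exact (hasDerivAt_Wl ℓ ht0).comp (t : ℂ) hlin
    simpa [mul_comm] using he.comp_ofReal
  set I : ℝ → ℂ := fun t => ∫ η in r1..t, f η with hI_def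
  have hI : ∀ t ∈ Set.Icc r1 r2, HasDerivAt I (f t) t := by
    intro t ht
    have hint : IntervalIntegrable f MeasureTheory.volume r1 t := by
      apply ContinuousOn.intervalIntegrable
      apply hfU.mono
      rw [Set.uIcc_of_le ht.1]
      exact fun x hx => hIccU ⟨hx.1, le_trans hx.2 ht.2⟩
    refine intervalIntegral.integral_hasDerivAt_right hint ?_ ?_
    · exact ⟨U, hU.mem_nhds (hIccU ht), (hfU.mono (by rfl)).aestronglyMeasurable hU.measurableSet⟩
    · exact (hfU t (hIccU ht)).continuousAt (hU.mem_nhds (hIccU ht))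
  set h : ℝ → ℂ := fun t => g t * Complex.exp (-(I t)) with hh_def
  have hh : ∀ t ∈ Set.uIcc r1 r2, HasDerivAt h 0 t := by
    rw [Set.uIcc_of_le hr12]
    intro t ht
    obtain ⟨ht0, htW⟩ := hIccU ht
    have h0 : HasDerivAt h
        (s * Wl' ℓ (s * t) * Complex.exp (-(I t)) +
          g t * (Complex.exp (-(I t)) * (-(f t)))) t :=
      (hg t ht).mul ((hI t ht).neg.cexp)
    convert h0 using 1
    have hfc : g t * f t = s * Wl' ℓ (s * t) := by
      simp only [hf_def, hg_def]
      field_simp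
    rw [mul_comm (Complex.exp (-(I t))) (-(f t)), ← mul_assoc, mul_neg, hfc]
    ring
  have hFTC : (∫ _t in r1..r2, (0 : ℂ)) = h r2 - h r1 :=
    intervalIntegral.integral_eq_sub_of_hasDerivAt hh intervalIntegrable_const
  have hconst : h r2 = h r1 := by
    have h0 : h r2 - h r1 = 0 := by simpa using hFTC.symm
    exact sub_eq_zero.mp h0
  have hIr1 : I r1 = 0 := intervalIntegral.integral_same
  have hkey : g r2 / g r1 = Complex.exp (I r2) := by
    have hgr1 : g r1 ≠ 0 := hW r1 ⟨le_refl r1, hr12⟩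
    have h1 : g r2 * Complex.exp (-(I r2)) = g r1 := by
      simpa [hh_def, hIr1] using hconst
    have hE : Complex.exp (-(I r2)) * Complex.exp (I r2) = 1 := by
      rw [← Complex.exp_add]; simp
    field_simp
    calc g r2 = g r2 * (Complex.exp (-(I r2)) * Complex.exp (I r2)) := by rw [hE]; ring
    _ = g r1 * Complex.exp (I r2) := by rw [← mul_assoc, h1]
  have hcong : (∫ η in r1..r2, boundaryKernel ℓ s η / (η : ℂ)) = I r2 := by
    apply intervalIntegral.integral_congr
    intro η hη
    rw [Set.uIcc_of_le hr12] at hη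
    obtain ⟨hη0, hηW⟩ := hIccU hη
    have hηr : (η : ℂ) ≠ 0 := by
      exact_mod_cast (lt_of_lt_of_le hr1 hη.1).ne'
    have hd : deriv (Wl ℓ) (s * η) = Wl' ℓ (s * η) := (hasDerivAt_Wl ℓ hη0).deriv
    simp only [boundaryKernel, hf_def, hd]
    field_simp
  refine ⟨?_, ?_⟩
  · rw [hcong]; exact hkey
  · rw [hcong, hkey]
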